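/- For every odd integrable periodic function f on ℝ with period a > 0 such that x ↦ f(x)/x is integrable on (0,∞), the integral ∫₀^∞ f(x)/x dx equals (π/a)·∫₀^{a/2} f(x)/tan(πx/a) dx. -/

import Mathlib

open Real MeasureTheory Filter Finset Topology

lemma summable_aux : Summable (fun n : ℕ => (1:ℝ)/((n:ℝ)+1)^2) := by
  have h := Real.summable_one_div_nat_pow.mpr (le_refl 2)
  have := (summable_nat_add_iff 1).mpr h
  refine this.congr (fun n => ?_)
  push_cast
  ring

lemma log_prod_sum (y : ℝ) (hy0 : 0 < y) (hy1 : y < 1/2) :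
    Tendsto (fun N => ∑ n ∈ Finset.range N, Real.log (1 - y^2/((n:ℝ)+1)^2)) atTop
      (𝓝 (Real.log (Real.sin (π * y)) - Real.log (π * y))) := by
  have hpos : ∀ n : ℕ, (0:ℝ) < 1 - y^2/((n:ℝ)+1)^2 := by
    intro n
    have h1 : y^2 < 1 := by nlinarith
    have h2 : (1:ℝ) ≤ ((n:ℝ)+1)^2 := by nlinarith [Nat.cast_nonneg (α := ℝ) n]
    have : y^2/((n:ℝ)+1)^2 < 1 := by
      rw [div_lt_one (by linarith)]; linarith
    linarith
  have hsin : 0 < Real.sin (π * y) := by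
    apply Real.sin_pos_of_pos_of_lt_pi (by positivity)
    nlinarith [Real.pi_pos]
  have heuler := Real.tendsto_euler_sin_prod y
  have hlog : Tendsto (fun N => Real.log (π * y * ∏ j ∈ Finset.range N, (1 - y^2/((j:ℝ)+1)^2)))
      atTop (𝓝 (Real.log (Real.sin (π * y)))) :=
    ((Real.continuousAt_log hsin.ne').tendsto.comp heuler)
  have key : ∀ N, ∑ n ∈ Finset.range N, Real.log (1 - y^2/((n:ℝ)+1)^2) =
      Real.log (π * y * ∏ j ∈ Finset.range N, (1 - y^2/((j:ℝ)+1)^2)) - Real.log (π * y) := by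
    intro N
    rw [Real.log_mul (by positivity) (Finset.prod_pos (fun j _ => hpos j)).ne',
      Real.log_prod (fun j _ => (hpos j).ne')]
    ring
  simp only [key]
  simpa using hlog.sub tendsto_const_nhds

lemma cot_series (t : ℝ) (ht0 : 0 < t) (ht1 : t < 1/2) :
    Tendsto (fun N => ∑ n ∈ Finset.range N, (2*t/(t^2 - ((n:ℝ)+1)^2))) atTop
      (𝓝 (π * (Real.cos (π * t) / Real.sin (π * t)) - 1/t)) := by
  set s : Set ℝ := Set.Ioo 0 (1/2) with hs
  set g : ℕ → ℝ → ℝ := fun n y => Real.log (1 - y^2/((n:ℝ)+1)^2) with hg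
  set g' : ℕ → ℝ → ℝ := fun n y => 2*y/(y^2 - ((n:ℝ)+1)^2) with hg'
  set u : ℕ → ℝ := fun n => (4/3)/((n:ℝ)+1)^2 with hu
  have hts : t ∈ s := ⟨ht0, ht1⟩
  have hu_sum : Summable u := by
    exact (summable_aux.mul_left (4/3)).congr (fun n => by simp only [hu]; ring)
  have hne : ∀ (n : ℕ) (y : ℝ), y ∈ s → y^2 - ((n:ℝ)+1)^2 ≠ 0 := by
    intro n y hy
    have h1 : y^2 < 1 := by nlinarith [hy.1, hy.2]
    have h2 : (1:ℝ) ≤ ((n:ℝ)+1)^2 := by nlinarith [Nat.cast_nonneg (α := ℝ) n]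
    nlinarith
  have hderiv : ∀ (n : ℕ) (y : ℝ), y ∈ s → HasDerivAt (g n) (g' n y) y := by
    intro n y hy
    have hc : ((n:ℝ)+1)^2 ≠ 0 := by positivity
    have h1 : HasDerivAt (fun y : ℝ => 1 - y^2/((n:ℝ)+1)^2) (-(2*y/((n:ℝ)+1)^2)) y := by
      simpa using ((hasDerivAt_pow 2 y).div_const (((n:ℝ)+1)^2)).const_sub 1
    have hpos : (0:ℝ) < 1 - y^2/((n:ℝ)+1)^2 := by
      have h2 : (1:ℝ) ≤ ((n:ℝ)+1)^2 := by nlinarith [Nat.cast_nonneg (α := ℝ) n]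
      have : y^2 < 1 := by nlinarith [hy.1, hy.2]
      have : y^2/((n:ℝ)+1)^2 < 1 := by rw [div_lt_one (by positivity)]; linarith
      linarith
    have := h1.log hpos.ne'
    convert this using 1
    rw [hg']
    rw [div_eq_div_iff (hne n y hy) (by linarith)]
    field_simp
    ring
  have hbound : ∀ (n : ℕ) (y : ℝ), y ∈ s → ‖g' n y‖ ≤ u n := by
    intro n y hy
    have h0 : (0:ℝ) < y := hy.1
    have h1 : y < 1/2 := hy.2
    have h2 : (1:ℝ) ≤ ((n:ℝ)+1)^2 := by nlinarith [Nat.cast_nonneg (α := ℝ) n]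
    have h3 : (0:ℝ) < ((n:ℝ)+1)^2 - y^2 := by nlinarith
    rw [hg', Real.norm_eq_abs, abs_div, abs_of_pos (by linarith : (0:ℝ) < 2*y),
      abs_of_neg (by nlinarith : y^2 - ((n:ℝ)+1)^2 < 0)]
    rw [hu, div_le_div_iff₀ (by linarith) (by positivity)]
    nlinarith [Nat.cast_nonneg (α := ℝ) n]
  have hsummable : ∀ y ∈ s, Summable (fun n => g n y) := by
    intro y hy
    apply Summable.of_norm_bounded (g := fun n : ℕ => 2*y^2 * ((1:ℝ)/((n:ℝ)+1)^2)) (summable_aux.mul_left _)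
    intro n
    have h2 : (1:ℝ) ≤ ((n:ℝ)+1)^2 := by nlinarith [Nat.cast_nonneg (α := ℝ) n]
    have hx0 : (0:ℝ) ≤ y^2/((n:ℝ)+1)^2 := by positivity
    have hx1 : y^2/((n:ℝ)+1)^2 ≤ 1/2 := by
      rw [div_le_div_iff₀ (by positivity) (by norm_num)]
      nlinarith [hy.1, hy.2]
    have hpos : (0:ℝ) < 1 - y^2/((n:ℝ)+1)^2 := by linarith
    rw [hg, Real.norm_eq_abs, abs_of_nonpos (Real.log_nonpos (by linarith) (by linarith))]
    have hlog : Real.log (1 - y^2/((n:ℝ)+1)^2)⁻¹ ≤ (1 - y^2/((n:ℝ)+1)^2)⁻¹ - 1 :=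
      Real.log_le_sub_one_of_pos (by positivity)
    rw [← Real.log_inv]
    set X := y^2/((n:ℝ)+1)^2 with hX
    calc Real.log (1 - X)⁻¹ ≤ (1 - X)⁻¹ - 1 := hlog
      _ = X / (1 - X) := by field_simp; ring
      _ ≤ 2*X := by rw [div_le_iff₀ hpos]; nlinarith
      _ = 2*y^2 * ((1:ℝ)/((n:ℝ)+1)^2) := by rw [hX]; ring
  have htsum_eq : ∀ y ∈ s, ∑' n, g n y = Real.log (Real.sin (π*y)) - Real.log (π*y) := by
    intro y hy
    exact tendsto_nhds_unique (hsummable y hy).hasSum.tendsto_sum_nat (log_prod_sum y hy.1 hy.2)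
  have hmain := hasDerivAt_tsum_of_isPreconnected hu_sum isOpen_Ioo isPreconnected_Ioo
    hderiv hbound hts (hsummable t hts) hts
  have heq : (fun z => ∑' n, g n z) =ᶠ[𝓝 t]
      (fun z => Real.log (Real.sin (π*z)) - Real.log (π*z)) := by
    filter_upwards [isOpen_Ioo.mem_nhds hts] with z hz
    exact htsum_eq z hz
  have hmain2 : HasDerivAt (fun z => Real.log (Real.sin (π*z)) - Real.log (π*z))
      (∑' n, g' n t) t := hmain.congr_of_eventuallyEq heq.symm
  have hsin : Real.sin (π*t) ≠ 0 := by
    apply ne_of_gt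
    apply Real.sin_pos_of_pos_of_lt_pi (by positivity)
    nlinarith [Real.pi_pos]
  have hd2 : HasDerivAt (fun z => Real.log (Real.sin (π*z)) - Real.log (π*z))
      (π * (Real.cos (π * t) / Real.sin (π * t)) - 1/t) t := by
    have hA : HasDerivAt (fun z : ℝ => π * z) (π * 1) t := (hasDerivAt_id t).const_mul π
    have hB := (hA.sin).log hsin
    have hC := hA.log (by positivity : π * t ≠ 0)
    have := hB.sub hC
    refine this.congr_deriv ?_
    rw [mul_one]
    field_simp
  have hval : ∑' n, g' n t = π * (Real.cos (π * t) / Real.sin (π * t)) - 1/t :=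
    hmain2.unique hd2
  have hsum' : Summable (fun n => g' n t) :=
    Summable.of_norm_bounded hu_sum (fun n => hbound n t hts)
  have := hsum'.hasSum.tendsto_sum_nat
  rw [hval] at this
  exact this

lemma cot_sum (t : ℝ) (ht0 : 0 < t) (ht1 : t < 1/2) :
    Tendsto (fun N => ∑ n ∈ Finset.range N, (1/(t+(n:ℝ)) - 1/((n:ℝ)+1-t))) atTop
      (𝓝 (π * (Real.cos (π * t) / Real.sin (π * t)))) := by
  have hd1 : ∀ n : ℕ, (0:ℝ) < t + n := fun n => by positivity
  have hd2 : ∀ n : ℕ, (0:ℝ) < (n:ℝ) + 1 - t := by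
    intro n; have : (0:ℝ) ≤ n := Nat.cast_nonneg n; linarith
  have hd3 : ∀ n : ℕ, t^2 - ((n:ℝ)+1)^2 ≠ 0 := by
    intro n; have : (0:ℝ) ≤ n := Nat.cast_nonneg n; nlinarith
  have key : ∀ N : ℕ, ∑ n ∈ Finset.range N, (1/(t+(n:ℝ)) - 1/((n:ℝ)+1-t)) =
      (∑ n ∈ Finset.range N, 2*t/(t^2 - ((n:ℝ)+1)^2)) + (1/t - 1/(t+(N:ℝ))) := by
    intro N
    have tel : ∑ n ∈ Finset.range N, (1/(t+(n:ℝ)) - 1/(t+((n:ℝ)+1)))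
        = 1/(t+((0:ℕ):ℝ)) - 1/(t+(N:ℝ)) := by
      have := Finset.sum_range_sub' (fun n : ℕ => 1/(t+(n:ℝ))) N
      simpa [Nat.cast_add, Nat.cast_one] using this
    have split : ∀ n : ℕ, (1/(t+(n:ℝ)) - 1/((n:ℝ)+1-t)) =
        2*t/(t^2 - ((n:ℝ)+1)^2) + (1/(t+(n:ℝ)) - 1/(t+((n:ℝ)+1))) := by
      intro n
      have h1 := (hd1 n).ne'
      have h2 := (hd2 n).ne'
      have h3 := hd3 n
      have h4 : t + ((n:ℝ)+1) ≠ 0 := by have := hd1 n; have : (0:ℝ) ≤ n := Nat.cast_nonneg n; positivity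
      field_simp
      ring
    rw [Finset.sum_congr rfl (fun n _ => split n), Finset.sum_add_distrib, tel]
    simp
  have h0 : Tendsto (fun N : ℕ => 1/(t+(N:ℝ))) atTop (𝓝 0) := by
    simp only [one_div]
    apply Tendsto.inv_tendsto_atTop
    exact tendsto_atTop_add_const_left atTop t tendsto_natCast_atTop_atTop
  have := (cot_series t ht0 ht1).add ((tendsto_const_nhds (x := 1/t)).sub h0)
  simp only [key]
  simpa using this

lemma sum_sq_le : ∀ M : ℕ, ∑ i ∈ Finset.range M, (1:ℝ)/((i:ℝ)+1)^2 ≤ 2 := by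
  have key : ∀ M : ℕ, ∑ i ∈ Finset.range (M+1), (1:ℝ)/((i:ℝ)+1)^2 ≤ 2 - 1/((M:ℝ)+1) := by
    intro M
    induction M with
    | zero => norm_num
    | succ M ih =>
      rw [Finset.sum_range_succ]
      have h1 : (0:ℝ) < (M:ℝ)+1 := by positivity
      have h2 : (0:ℝ) < (M:ℝ)+2 := by positivity
      have step : (1:ℝ)/(((M+1:ℕ):ℝ)+1)^2 ≤ 1/((M:ℝ)+1) - 1/(((M+1:ℕ):ℝ)+1) := by
        push_cast
        rw [div_sub_div _ _ h1.ne' (by positivity), div_le_div_iff₀ (by positivity) (by positivity)]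
        nlinarith [Nat.cast_nonneg (α := ℝ) M]
      push_cast at step ⊢
      linarith [ih]
  intro M
  cases M with
  | zero => simp
  | succ M =>
    have h := key M
    have h2 : (0:ℝ) < 1/((M:ℝ)+1) := by positivity
    linarith

theorem stmt_3 (f : ℝ → ℝ) (a : ℝ) (ha : 0 < a)
    (hodd : ∀ x, f (-x) = -f x)
    (hper : Function.Periodic f a)
    (hint : IntegrableOn f (Set.Ioc 0 a))
    (hint1 : IntegrableOn (fun x => f x / x) (Set.Ioi 0))
    (hint2 : IntegrableOn (fun x => f x / Real.tan (Real.pi * x / a)) (Set.Ioc 0 (a / 2))) :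
    ∫ x in Set.Ioi (0:ℝ), f x / x =
      (Real.pi / a) * ∫ x in (0:ℝ)..(a / 2), f x / Real.tan (Real.pi * x / a) := by
  have ha2 : (0:ℝ) < a/2 := by linarith
  set H : ℕ → ℝ → ℝ := fun n x => f x * (1/(x + n*a) - 1/((n+1)*a - x)) with hH
  -- basic integrability
  have hf2 : IntegrableOn f (Set.Ioc 0 (a/2)) :=
    hint.mono_set (Set.Ioc_subset_Ioc_right (by linarith))
  have hfII : IntervalIntegrable f volume 0 (a/2) := by
    rw [intervalIntegrable_iff_integrableOn_Ioc_of_le (le_of_lt ha2)]; exact hf2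
  have hfIIa : IntervalIntegrable f volume (a/2) a := by
    rw [intervalIntegrable_iff_integrableOn_Ioc_of_le (by linarith)]
    exact hint.mono_set (Set.Ioc_subset_Ioc_left (le_of_lt ha2))
  have hfx : IntervalIntegrable (fun x => f x / x) volume 0 (a/2) := by
    rw [intervalIntegrable_iff_integrableOn_Ioc_of_le (le_of_lt ha2)]
    exact hint1.mono_set (fun x hx => hx.1)
  have hper_n : ∀ (n : ℕ) (x : ℝ), f (x + n*a) = f x := fun n x => (hper.nat_mul n) x
  -- interval integrability of the pieces on [0, a/2]
  have hIA : ∀ n : ℕ, IntervalIntegrable (fun x => f x / (x + n*a)) volume 0 (a/2) := by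
    intro n
    cases n with
    | zero => simpa using hfx
    | succ n =>
      have hcont : ContinuousOn (fun x : ℝ => (x + ((n+1:ℕ):ℝ)*a)⁻¹) (Set.uIcc 0 (a/2)) := by
        apply ContinuousOn.inv₀ (by fun_prop)
        intro x hx
        rw [Set.uIcc_of_le (le_of_lt ha2)] at hx
        have hn : (0:ℝ) ≤ n := Nat.cast_nonneg n
        push_cast
        nlinarith [hx.1]
      have := hfII.mul_continuousOn hcont
      simp only [div_eq_mul_inv]
      exact this
  have hIB : ∀ n : ℕ, IntervalIntegrable (fun x => f x / ((n+1)*a - x)) volume 0 (a/2) := by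
    intro n
    have hcont : ContinuousOn (fun x : ℝ => (((n:ℝ)+1)*a - x)⁻¹) (Set.uIcc 0 (a/2)) := by
      apply ContinuousOn.inv₀ (by fun_prop)
      intro x hx
      rw [Set.uIcc_of_le (le_of_lt ha2)] at hx
      have : (0:ℝ) ≤ n := Nat.cast_nonneg n
      nlinarith [hx.2]
    have := hfII.mul_continuousOn hcont
    simp only [div_eq_mul_inv]
    exact this
  have hIH : ∀ n : ℕ, IntervalIntegrable (H n) volume 0 (a/2) := by
    intro n
    have heq : H n = fun x => f x/(x + n*a) - f x/((n+1)*a - x) := by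
      funext x; rw [hH]; ring
    rw [heq]
    exact (hIA n).sub (hIB n)
  -- step: each period integral
  have hJ : ∀ n : ℕ, (∫ x in ((n:ℝ)*a)..(((n:ℝ)+1)*a), f x / x) =
      ∫ x in (0:ℝ)..a, f x / (x + n*a) := by
    intro n
    have h1 : (∫ x in (0:ℝ)..a, f (x + n*a) / (x + n*a)) =
        ∫ x in ((0:ℝ)+n*a)..(a+n*a), f x / x :=
      intervalIntegral.integral_comp_add_right (fun y => f y / y) ((n:ℝ)*a)
    have h2 : (∫ x in (0:ℝ)..a, f (x + n*a) / (x + n*a)) =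
        ∫ x in (0:ℝ)..a, f x / (x + n*a) := by
      apply intervalIntegral.integral_congr
      intro x _
      simp only
      rw [hper_n n x]
    rw [← h2, h1]
    congr 1 <;> ring
  have hK : ∀ n : ℕ, (∫ x in (0:ℝ)..a, f x / (x + n*a)) =
      ∫ x in (0:ℝ)..(a/2), H n x := by
    intro n
    have hI2 : IntervalIntegrable (fun x => f x / (x + n*a)) volume (a/2) a := by
      have hcont : ContinuousOn (fun x : ℝ => (x + (n:ℝ)*a)⁻¹) (Set.uIcc (a/2) a) := by
        apply ContinuousOn.inv₀ (by fun_prop)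
        intro x hx
        rw [Set.uIcc_of_le (by linarith)] at hx
        have hn : (0:ℝ) ≤ (n:ℝ)*a := by positivity
        nlinarith [hx.1]
      have := hfIIa.mul_continuousOn hcont
      simp only [div_eq_mul_inv]
      exact this
    rw [← intervalIntegral.integral_add_adjacent_intervals (hIA n) hI2]
    have hrefl : (∫ x in (a/2:ℝ)..a, f x / (x + n*a)) =
        ∫ x in (0:ℝ)..(a/2), f (a - x) / (a - x + n*a) := by
      have h1 := intervalIntegral.integral_comp_sub_left (a := 0) (b := a/2)
        (fun y => f y / (y + n*a)) a
      rw [h1]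
      congr 1 <;> ring
    have hneg : (∫ x in (0:ℝ)..(a/2), f (a - x) / (a - x + n*a)) =
        ∫ x in (0:ℝ)..(a/2), -(f x / ((n+1)*a - x)) := by
      apply intervalIntegral.integral_congr
      intro x _
      simp only
      have : f (a - x) = - f x := by
        have h1 : f (-x + a) = f (-x) := hper (-x)
        have : a - x = -x + a := by ring
        rw [this, h1, hodd]
      rw [this]
      have : a - x + (n:ℝ)*a = ((n:ℝ)+1)*a - x := by ring
      rw [this]
      ring
    rw [hrefl, hneg, intervalIntegral.integral_neg]
    have := intervalIntegral.integral_sub (hIA n) (hIB n)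
    rw [← sub_eq_add_neg, ← this]
    apply intervalIntegral.integral_congr
    intro x _
    rw [hH]
    ring
  -- step: sum over periods
  have hF : ∀ N : ℕ, (∫ x in (0:ℝ)..((N:ℝ)*a), f x / x) =
      ∫ x in (0:ℝ)..(a/2), ∑ n ∈ Finset.range N, H n x := by
    intro N
    have hseq : ∀ k : ℕ, k < N → IntervalIntegrable (fun x => f x / x) volume
        ((fun n : ℕ => (n:ℝ)*a) k) ((fun n : ℕ => (n:ℝ)*a) (k+1)) := by
      intro k _
      simp only
      rw [intervalIntegrable_iff_integrableOn_Ioc_of_le (by push_cast; nlinarith [Nat.cast_nonneg (α := ℝ) k])]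
      apply hint1.mono_set
      intro x hx
      have : (0:ℝ) ≤ (k:ℝ)*a := by positivity
      exact lt_of_le_of_lt this hx.1
    have h1 := intervalIntegral.sum_integral_adjacent_intervals hseq
    simp only [Nat.cast_zero, zero_mul] at h1
    rw [← h1]
    rw [Finset.sum_congr rfl (fun n _ => by
      push_cast
      rw [hJ n, hK n])]
    rw [← intervalIntegral.integral_finset_sum (fun n _ => hIH n)]
  -- the kernel sums
  set c : ℕ → ℝ → ℝ := fun N x => ∑ n ∈ Finset.range N, (1/(x + n*a) - 1/((n+1)*a - x)) with hc
  have hHc : ∀ N x, ∑ n ∈ Finset.range N, H n x = f x * c N x := by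
    intro N x
    rw [hc, Finset.mul_sum]
  -- bound on c
  have hc_bound : ∀ (N : ℕ), ∀ x ∈ Set.Ioc (0:ℝ) (a/2), 0 ≤ c N x ∧ c N x ≤ 1/x + 2/a := by
    intro N x hx
    obtain ⟨hx1, hx2⟩ := hx
    constructor
    · apply Finset.sum_nonneg
      intro n _
      have hn : (0:ℝ) ≤ n := Nat.cast_nonneg n
      have hA : (0:ℝ) < x + n*a := by positivity
      have hB : x + (n:ℝ)*a ≤ ((n:ℝ)+1)*a - x := by nlinarith
      have := one_div_le_one_div_of_le hA hB
      linarith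
    · rw [hc]
      cases N with
      | zero => simp; positivity
      | succ M =>
        simp only
        rw [Finset.sum_range_succ']
        have hterm0 : 1/(x + ((0:ℕ):ℝ)*a) - 1/((((0:ℕ):ℝ)+1)*a - x) ≤ 1/x := by
          push_cast
          have : (0:ℝ) < 1*a - x := by nlinarith
          have : (0:ℝ) < 1/(1*a - x) := by positivity
          rw [zero_mul, add_zero]
          linarith
        have hterm : ∀ i : ℕ, 1/(x + ((i+1:ℕ):ℝ)*a) - 1/((((i+1:ℕ):ℝ)+1)*a - x) ≤
            (1/a) * (1/((i:ℝ)+1)^2) := by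
          intro i
          push_cast
          set m : ℝ := (i:ℝ)+1 with hm
          have hm1 : (1:ℝ) ≤ m := by rw [hm]; have : (0:ℝ) ≤ i := Nat.cast_nonneg i; linarith
          have hD1 : (0:ℝ) < x + m*a := by nlinarith
          have hD2 : (0:ℝ) < (m+1)*a - x := by nlinarith
          have key : 1/(x + m*a) - 1/((m+1)*a - x) ≤ 1/(a*m^2) := by
            rw [div_sub_div _ _ hD1.ne' hD2.ne', div_le_div_iff₀ (by positivity) (by positivity)]
            have e1 : m*a ≤ x + m*a := by linarith
            have e2 : m*a ≤ (m+1)*a - x := by nlinarith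
            nlinarith [mul_le_mul e1 e2 (by nlinarith) (by linarith)]
          calc 1/(x + m*a) - 1/((m+1)*a - x) ≤ 1/(a*m^2) := key
            _ = (1/a) * (1/m^2) := (one_div_mul_one_div a (m^2)).symm
        calc (∑ i ∈ Finset.range M, (1/(x + ((i+1:ℕ):ℝ)*a) - 1/((((i+1:ℕ):ℝ)+1)*a - x)))
              + (1/(x + ((0:ℕ):ℝ)*a) - 1/((((0:ℕ):ℝ)+1)*a - x))
            ≤ (∑ i ∈ Finset.range M, (1/a) * (1/((i:ℝ)+1)^2)) + 1/x :=
              add_le_add (Finset.sum_le_sum (fun i _ => hterm i)) hterm0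
          _ = (1/a) * (∑ i ∈ Finset.range M, 1/((i:ℝ)+1)^2) + 1/x := by rw [Finset.mul_sum]
          _ ≤ (1/a) * 2 + 1/x :=
              add_le_add_left (mul_le_mul_of_nonneg_left (sum_sq_le M) (by positivity)) _
          _ = 1/x + 2/a := by ring
  -- pointwise limit of c
  have hc_lim : ∀ x ∈ Set.Ioc (0:ℝ) (a/2), Tendsto (fun N => f x * c N x) atTop
      (𝓝 (f x * (π/a * (Real.cos (π*x/a)/Real.sin (π*x/a))))) := by
    intro x hx
    obtain ⟨hx1, hx2⟩ := hx
    rcases eq_or_lt_of_le hx2 with heq | hlt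
    · -- x = a/2
      have hczero : ∀ N, c N x = 0 := by
        intro N
        rw [hc]
        apply Finset.sum_eq_zero
        intro n _
        have : x + (n:ℝ)*a = ((n:ℝ)+1)*a - x := by rw [heq]; ring
        rw [this, sub_self]
      have hcos : Real.cos (π*x/a) = 0 := by
        rw [heq]
        have : π * (a/2) / a = π/2 := by field_simp
        rw [this, Real.cos_pi_div_two]
      simp only [hczero, hcos, mul_zero, zero_div, mul_zero, zero_mul]
      exact tendsto_const_nhds
    · -- x < a/2
      set t : ℝ := x/a with ht
      have ht0 : 0 < t := by positivity
      have ht1 : t < 1/2 := by rw [ht, div_lt_iff₀ ha]; linarith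
      have hcN : ∀ N, c N x = (1/a) * ∑ n ∈ Finset.range N, (1/(t+(n:ℝ)) - 1/((n:ℝ)+1-t)) := by
        intro N
        rw [hc, Finset.mul_sum]
        apply Finset.sum_congr rfl
        intro n _
        have hn : (0:ℝ) ≤ n := Nat.cast_nonneg n
        have d1 : t + (n:ℝ) ≠ 0 := by positivity
        have d2 : (n:ℝ) + 1 - t ≠ 0 := by intro h; nlinarith
        rw [ht] at d1 d2 ⊢
        field_simp
      have hlim := (cot_sum t ht0 ht1).const_mul (1/a)
      have hval : (1/a) * (π * (Real.cos (π * t) / Real.sin (π * t)))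
          = π/a * (Real.cos (π*x/a)/Real.sin (π*x/a)) := by
        rw [ht, mul_div_assoc]
        ring
      rw [hval] at hlim
      simp only [hcN]
      exact hlim.const_mul (f x)
  -- dominated convergence
  have hmeasf : AEStronglyMeasurable f (volume.restrict (Set.Ioc 0 (a/2))) :=
    hf2.aestronglyMeasurable
  have hDCT : Tendsto (fun N => ∫ x in Set.Ioc (0:ℝ) (a/2), f x * c N x) atTop
      (𝓝 (∫ x in Set.Ioc (0:ℝ) (a/2), f x * (π/a * (Real.cos (π*x/a)/Real.sin (π*x/a))))) := by
    apply MeasureTheory.tendsto_integral_of_dominated_convergence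
      (bound := fun x => |f x| * (1/x + 2/a))
    · intro N
      apply hmeasf.mul
      apply Measurable.aestronglyMeasurable
      apply Finset.measurable_sum
      intro n _
      apply Measurable.sub
      · simp only [one_div]
        exact (measurable_id.add_const _).inv
      · simp only [one_div]
        exact (measurable_const.sub measurable_id).inv
    · have h1 : IntegrableOn (fun x => |f x / x| + (2/a)*|f x|) (Set.Ioc 0 (a/2)) := by
        apply Integrable.add
        · exact (hint1.mono_set (fun x hx => hx.1)).abs
        · exact hf2.abs.const_mul (2/a)
      apply h1.congr_fun _ measurableSet_Ioc
      intro x hx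
      simp only
      rw [abs_div, abs_of_pos hx.1]
      ring
    · intro N
      rw [ae_restrict_iff' measurableSet_Ioc]
      apply Filter.Eventually.of_forall
      intro x hx
      obtain ⟨hge, hle⟩ := hc_bound N x hx
      rw [Real.norm_eq_abs, abs_mul, abs_of_nonneg hge]
      exact mul_le_mul_of_nonneg_left hle (abs_nonneg _)
    · rw [ae_restrict_iff' measurableSet_Ioc]
      apply Filter.Eventually.of_forall
      intro x hx
      exact hc_lim x hx
  -- put everything together
  have hlim1 : Tendsto (fun N : ℕ => ∫ x in (0:ℝ)..((N:ℝ)*a), f x / x) atTop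
      (𝓝 (∫ x in Set.Ioi (0:ℝ), f x / x)) :=
    MeasureTheory.intervalIntegral_tendsto_integral_Ioi 0 hint1
      (tendsto_natCast_atTop_atTop.atTop_mul_const ha)
  have hFc : ∀ N : ℕ, (∫ x in (0:ℝ)..((N:ℝ)*a), f x / x)
      = ∫ x in Set.Ioc (0:ℝ) (a/2), f x * c N x := by
    intro N
    rw [hF N, intervalIntegral.integral_of_le (le_of_lt ha2)]
    apply setIntegral_congr_fun measurableSet_Ioc
    intro x _
    exact hHc N x
  have hlim2 : Tendsto (fun N : ℕ => ∫ x in (0:ℝ)..((N:ℝ)*a), f x / x) atTop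
      (𝓝 (∫ x in Set.Ioc (0:ℝ) (a/2), f x * (π/a * (Real.cos (π*x/a)/Real.sin (π*x/a))))) := by
    simp only [hFc]
    exact hDCT
  rw [tendsto_nhds_unique hlim1 hlim2]
  rw [intervalIntegral.integral_of_le (le_of_lt ha2), ← MeasureTheory.integral_const_mul]
  apply MeasureTheory.integral_congr_ae
  apply Filter.Eventually.of_forall
  intro x
  simp only
  rw [Real.tan_eq_sin_div_cos, div_div_eq_mul_div]
  ring
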